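/- arXiv:2111.03564 — 3 statements merged into one kernel-verified Lean document; each statement's English description precedes it below -/
import Mathlib

section
/- (Theorem 2, SL-DRS invariance) Let W ⊆ ℝⁿ, A ∈ ℝⁿˣⁿ, B ∈ ℝⁿˣᵐ, and matrices Φ_e⁰ = I, Φ_e¹, ..., Φ_eᴺ = 0 in ℝⁿˣⁿ and Φ_k⁰, ..., Φ_kᴺ = 0 in ℝᵐˣⁿ satisfying Φ_e^{j+1} = A Φ_e^j + B Φ_k^j for all 0 ≤ j ≤ N−1. For any disturbances w_0, ..., w_N ∈ W, if e = Σ_{j=0}^{N−1} Φ_e^j w_{N−1−j} and u = Σ_{j=0}^{N−1} Φ_k^j w_{N−1−j}, then A e + B u + w_N = Σ_{j=0}^{N−1} Φ_e^j w_{N−j}. Consequently, the set F_{e,N} = ⊕_{j=0}^{N−1} Φ_e^j W is invariant: if e ∈ F_{e,N} has the above convolutional form with weights in W and the control law π(w) = Σ_{j=0}^{N−1} Φ_k^j w_{N−1−j} is applied, then A e + B π + w ∈ F_{e,N} for every w ∈ W. -/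
open Matrix BigOperators Finset

/-- The system level disturbance reachable set `F_i = Φ⁰W ⊕ ... ⊕ Φ^{i-1}W`. -/
def SLDRS {n : ℕ} (W : Set (Fin n → ℝ)) (Φ : ℕ → Matrix (Fin n) (Fin n) ℝ) (i : ℕ) :
    Set (Fin n → ℝ) :=
  {x | ∃ w : Fin i → (Fin n → ℝ), (∀ j, w j ∈ W) ∧ x = ∑ j : Fin i, Φ (j : ℕ) *ᵥ w j}

/-- Theorem 2, SL-DRS invariance: under the FIR-constrained affine SLP
recursion, one step of the closed-loop error dynamics shifts the convolution, and
hence `F_{e,N}` is invariant under the control law `π(w) = ∑ Φ_k^j w_{N-1-j}`. -/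
theorem sldrs_invariance {n m N : ℕ}
    (W : Set (Fin n → ℝ))
    (A : Matrix (Fin n) (Fin n) ℝ) (B : Matrix (Fin n) (Fin m) ℝ)
    (Φe : ℕ → Matrix (Fin n) (Fin n) ℝ) (Φk : ℕ → Matrix (Fin m) (Fin n) ℝ)
    (hΦe0 : Φe 0 = 1) (hΦeN : Φe N = 0) (hΦkN : Φk N = 0)
    (hrec : ∀ j < N, Φe (j + 1) = A * Φe j + B * Φk j)
    (w : ℕ → (Fin n → ℝ)) (hw : ∀ i ≤ N, w i ∈ W)
    (e : Fin n → ℝ) (u : Fin m → ℝ)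
    (he : e = ∑ j ∈ Finset.range N, Φe j *ᵥ w (N - 1 - j))
    (hu : u = ∑ j ∈ Finset.range N, Φk j *ᵥ w (N - 1 - j)) :
    (A *ᵥ e + B *ᵥ u + w N = ∑ j ∈ Finset.range N, Φe j *ᵥ w (N - j)) ∧
      A *ᵥ e + B *ᵥ u + w N ∈ SLDRS W Φe N := by
  have key : A *ᵥ e + B *ᵥ u + w N = ∑ j ∈ Finset.range N, Φe j *ᵥ w (N - j) := by
    subst he hu
    rw [show (A *ᵥ ∑ j ∈ Finset.range N, Φe j *ᵥ w (N - 1 - j))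
          = ∑ j ∈ Finset.range N, A *ᵥ (Φe j *ᵥ w (N - 1 - j)) from
        map_sum A.mulVecLin _ _,
      show (B *ᵥ ∑ j ∈ Finset.range N, Φk j *ᵥ w (N - 1 - j))
          = ∑ j ∈ Finset.range N, B *ᵥ (Φk j *ᵥ w (N - 1 - j)) from
        map_sum B.mulVecLin _ _]
    have h1 : ∀ j ∈ Finset.range N,
        A *ᵥ (Φe j *ᵥ w (N - 1 - j)) + B *ᵥ (Φk j *ᵥ w (N - 1 - j))
          = Φe (j + 1) *ᵥ w (N - (j + 1)) := by
      intro j hj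
      rw [Finset.mem_range] at hj
      rw [hrec j hj]
      have : N - 1 - j = N - (j + 1) := by omega
      rw [this, add_mulVec, mulVec_mulVec, mulVec_mulVec]
    rw [← Finset.sum_add_distrib, Finset.sum_congr rfl h1]
    have h2 : ∑ j ∈ Finset.range N, Φe (j + 1) *ᵥ w (N - (j + 1))
        = ∑ j ∈ Finset.range (N + 1), Φe j *ᵥ w (N - j) - Φe 0 *ᵥ w (N - 0) := by
      rw [Finset.sum_range_succ' (fun j => Φe j *ᵥ w (N - j)) N]
      abel
    rw [h2, Finset.sum_range_succ, hΦeN, hΦe0]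
    simp [zero_mulVec]
  refine ⟨key, ?_⟩
  rw [key]
  exact ⟨fun j => w (N - (j : ℕ)), fun j => hw _ (Nat.sub_le _ _),
    (Fin.sum_univ_eq_sum_range (fun j => Φe j *ᵥ w (N - j)) N).symm⟩
end

section
/- (Affine SLP, direction 1) Let 𝒵𝒜 and 𝒵ℬ be strictly block-lower-triangular (nilpotent) matrices and K any block-lower-triangular matrix of compatible dimensions. Define Φ_x = (I − 𝒵𝒜 − 𝒵ℬK)⁻¹ and Φ_u = K(I − 𝒵𝒜 − 𝒵ℬK)⁻¹. Then (I − 𝒵𝒜 − 𝒵ℬK) is invertible, and Φ_x, Φ_u satisfy the affine subspace constraint (I − 𝒵𝒜)Φ_x − 𝒵ℬΦ_u = I. -/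
open Matrix

/-- Powers of a strictly graded-lower-triangular matrix vanish below the grading gap. -/
lemma strict_pow_zero {p : ℕ} (g : Fin p → ℕ) (N : Matrix (Fin p) (Fin p) ℝ)
    (h : ∀ i j, ¬ g j < g i → N i j = 0) :
    ∀ k i j, ¬ (g j + k ≤ g i) → (N ^ k) i j = 0 := by
  intro k
  induction k with
  | zero =>
    intro i j hij
    simp only [pow_zero, Matrix.one_apply]
    rcases eq_or_ne i j with rfl | hne
    · exact absurd (by omega) hij
    · simp [hne]
  | succ k ih =>
    intro i j hij
    rw [pow_succ', Matrix.mul_apply]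
    apply Finset.sum_eq_zero
    intro m _
    by_cases hm : g m < g i
    · rw [ih m j (by omega), mul_zero]
    · rw [h i m hm, zero_mul]

lemma strict_nilpotent {p : ℕ} (g : Fin p → ℕ) (N : Matrix (Fin p) (Fin p) ℝ)
    (h : ∀ i j, ¬ g j < g i → N i j = 0) : IsNilpotent N := by
  -- replace g by a grading with values < p
  set G : Fin p → ℕ := fun i => ((Finset.univ.image g).filter (· < g i)).card with hG
  have hGlt : ∀ i, G i < p := by
    intro i
    have hGi : G i = ((Finset.univ.image g).filter (· < g i)).card := rfl
    have h1 : (Finset.univ.image g).filter (· < g i) ⊂ Finset.univ.image g := by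
      refine Finset.ssubset_iff_of_subset (Finset.filter_subset _ _) |>.2 ?_
      exact ⟨g i, Finset.mem_image_of_mem g (Finset.mem_univ i), by simp⟩
    have h2 : (Finset.univ.image g).card ≤ p := by
      simpa using Finset.card_image_le (s := (Finset.univ : Finset (Fin p))) (f := g)
    have h3 := Finset.card_lt_card h1
    omega
  have hGmono : ∀ i j : Fin p, g j < g i → G j < G i := by
    intro i j hij
    apply Finset.card_lt_card
    refine Finset.ssubset_iff_of_subset ?_ |>.2 ?_
    · intro x hx
      simp only [Finset.mem_filter] at hx ⊢
      exact ⟨hx.1, by omega⟩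
    · refine ⟨g j, ?_, ?_⟩
      · simp only [Finset.mem_filter]
        exact ⟨Finset.mem_image_of_mem g (Finset.mem_univ j), hij⟩
      · simp
  refine ⟨p, ?_⟩
  ext i j
  have : ∀ i j : Fin p, ¬ G j < G i → N i j = 0 := by
    intro i j hij
    apply h
    intro hlt
    exact hij (hGmono i j hlt)
  have := strict_pow_zero G N this p i j (by have := hGlt i; omega)
  simpa using this

/-- Affine SLP, direction 1: for strictly block-lower-triangular `𝒵𝒜`, `𝒵ℬ`
(w.r.t. block gradings `bx`, `bu`) and block-lower-triangular `K`, the matrix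
`I - 𝒵𝒜 - 𝒵ℬK` is invertible and the resulting system responses
`Φ_x = (I - 𝒵𝒜 - 𝒵ℬK)⁻¹`, `Φ_u = K Φ_x` satisfy `(I - 𝒵𝒜)Φ_x - 𝒵ℬ Φ_u = I`. -/
theorem affine_slp_direction1 {p q : ℕ}
    (bx : Fin p → ℕ) (bu : Fin q → ℕ)
    (ZA : Matrix (Fin p) (Fin p) ℝ) (ZB : Matrix (Fin p) (Fin q) ℝ)
    (K : Matrix (Fin q) (Fin p) ℝ)
    (hZA : ∀ i j, bx i ≤ bx j → ZA i j = 0)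
    (hZB : ∀ i j, bx i ≤ bu j → ZB i j = 0)
    (hK : ∀ i j, bu i < bx j → K i j = 0) :
    IsUnit (1 - ZA - ZB * K) ∧
      (1 - ZA) * (1 - ZA - ZB * K)⁻¹ - ZB * (K * (1 - ZA - ZB * K)⁻¹) = 1 := by
  have hstrict : ∀ i j, ¬ bx j < bx i → (ZA + ZB * K) i j = 0 := by
    intro i j hij
    have hA : ZA i j = 0 := hZA i j (by omega)
    have hBK : (ZB * K) i j = 0 := by
      rw [Matrix.mul_apply]
      apply Finset.sum_eq_zero
      intro m _
      by_cases hm : bu m < bx i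
      · rw [hK m j (by omega), mul_zero]
      · rw [hZB i m (by omega), zero_mul]
    simp [Matrix.add_apply, hA, hBK]
  have hnil : IsNilpotent (ZA + ZB * K) := strict_nilpotent bx _ hstrict
  have hunit : IsUnit (1 - (ZA + ZB * K)) := hnil.isUnit_one_sub
  have heq : (1 : Matrix (Fin p) (Fin p) ℝ) - ZA - ZB * K = 1 - (ZA + ZB * K) := by rw [sub_sub]
  have hunit' : IsUnit (1 - ZA - ZB * K) := heq ▸ hunit
  refine ⟨hunit', ?_⟩
  have hmul : (1 - ZA - ZB * K) * (1 - ZA - ZB * K)⁻¹ = 1 :=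
    Matrix.mul_nonsing_inv _ (Matrix.isUnit_iff_isUnit_det _ |>.1 hunit')
  calc (1 - ZA) * (1 - ZA - ZB * K)⁻¹ - ZB * (K * (1 - ZA - ZB * K)⁻¹)
      = (1 - ZA - ZB * K) * (1 - ZA - ZB * K)⁻¹ := by
        rw [← Matrix.mul_assoc]; noncomm_ring
    _ = 1 := hmul
end

section
/- (Affine SLP, direction 2) Let Φ_x be invertible and Φ_u be matrices satisfying (I − 𝒵𝒜)Φ_x − 𝒵ℬΦ_u = I. Define K = Φ_u Φ_x⁻¹. Then the closed-loop map of the system x̃ = (𝒵𝒜 + 𝒵ℬK)x̃ + δ̃ equals Φ_x, i.e., (I − 𝒵𝒜 − 𝒵ℬK)⁻¹ = Φ_x, and K(I − 𝒵𝒜 − 𝒵ℬK)⁻¹ = Φ_u. -/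
open Matrix

/-- Affine SLP, direction 2: if invertible `Φ_x` and `Φ_u` satisfy the
affine subspace constraint `(I - 𝒵𝒜)Φ_x - 𝒵ℬΦ_u = 1`, then the controller
`K = Φ_u Φ_x⁻¹` achieves the system responses: `(I - 𝒵𝒜 - 𝒵ℬK)⁻¹ = Φ_x` and
`K (I - 𝒵𝒜 - 𝒵ℬK)⁻¹ = Φ_u`. -/
theorem affine_slp_direction2 {p q : ℕ}
    (ZA : Matrix (Fin p) (Fin p) ℝ) (ZB : Matrix (Fin p) (Fin q) ℝ)
    (Φx : Matrix (Fin p) (Fin p) ℝ) (Φu : Matrix (Fin q) (Fin p) ℝ)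
    (hΦx : IsUnit Φx)
    (hconstraint : (1 - ZA) * Φx - ZB * Φu = 1) :
    (1 - ZA - ZB * (Φu * Φx⁻¹))⁻¹ = Φx ∧
      (Φu * Φx⁻¹) * (1 - ZA - ZB * (Φu * Φx⁻¹))⁻¹ = Φu := by
  have hinv : Φx⁻¹ * Φx = 1 := nonsing_inv_mul Φx (isUnit_iff_isUnit_det Φx |>.mp hΦx)
  have key : (1 - ZA - ZB * (Φu * Φx⁻¹)) * Φx = 1 := by
    calc (1 - ZA - ZB * (Φu * Φx⁻¹)) * Φx
        = (1 - ZA) * Φx - ZB * (Φu * (Φx⁻¹ * Φx)) := by noncomm_ring; rw [Matrix.mul_assoc, Matrix.mul_assoc]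
      _ = 1 := by rw [hinv, Matrix.mul_one]; exact hconstraint
  have h1 : (1 - ZA - ZB * (Φu * Φx⁻¹))⁻¹ = Φx := inv_eq_right_inv key
  refine ⟨h1, ?_⟩
  rw [h1, Matrix.mul_assoc, hinv, Matrix.mul_one]
end
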